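/- On a regular imprecise terrain, every node s of an imprecise minimum S has the same lower elevation bound low(s); moreover, for every nonempty subset S' ⊆ S, PoWS(S') = PoWS(S) and WS(R⁻, S') = WS(R⁻, S), where R⁻ is the lowermost realization. -/

import Mathlib

open scoped Classical
open Set

/-- An imprecise terrain: a finite geometric graph with nodes in the plane,
each node carrying an elevation interval `[low v, high v]`. -/
structure ImpTerrain (V : Type) [Fintype V] [DecidableEq V] where
  pos : V → ℝ × ℝ
  posInj : Function.Injective pos
  adj : V → V → Prop
  adj_symm : ∀ u v, adj u v → adj v u
  adj_irrefl : ∀ v, ¬ adj v v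
  low : V → ℝ
  high : V → ℝ

namespace ImpTerrain

variable {V : Type} [Fintype V] [DecidableEq V]

/-- A realization assigns to each node an elevation within its interval. -/
def IsRealization (T : ImpTerrain V) (R : V → ℝ) : Prop :=
  ∀ v, T.low v ≤ R v ∧ R v ≤ T.high v

/-- Horizontal (plane) distance between two nodes. -/
noncomputable def hdist (T : ImpTerrain V) (u v : V) : ℝ := dist (T.pos u) (T.pos v)

/-- Slope (steepness of descent) of the edge from `p` to `q` in realization `R`. -/
noncomputable def slope (T : ImpTerrain V) (R : V → ℝ) (p q : V) : ℝ :=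
  (R p - R q) / T.hdist p q

/-- `q` is a steepest-descent neighbor of `p` in `R`. -/
def SDN (T : ImpTerrain V) (R : V → ℝ) (p q : V) : Prop :=
  T.adj p q ∧ 0 ≤ T.slope R p q ∧ ∀ r, T.adj p r → T.slope R p r ≤ T.slope R p q

/-- The neighborhood of a set of nodes. -/
def Nbhd (T : ImpTerrain V) (P : Set V) : Set V :=
  {s | s ∉ P ∧ ∃ t ∈ P, T.adj s t}

/-- `u` and `v` are connected by a path staying inside `P`. -/
def ConnIn (T : ImpTerrain V) (P : Set V) (u v : V) : Prop :=
  Relation.ReflTransGen (fun a b => T.adj a b ∧ a ∈ P ∧ b ∈ P) u v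

/-- `P` is a local minimum in realization `R`: nonempty, connected, all nodes at
the same elevation, strictly below its neighborhood. -/
def LocalMin (T : ImpTerrain V) (R : V → ℝ) (P : Set V) : Prop :=
  P.Nonempty ∧ (∀ u ∈ P, ∀ v ∈ P, T.ConnIn P u v) ∧
    (∀ u ∈ P, ∀ v ∈ P, R u = R v) ∧ (∀ u ∈ P, ∀ t ∈ T.Nbhd P, R u < R t)

def InLocalMin (T : ImpTerrain V) (R : V → ℝ) (p : V) : Prop :=
  ∃ P, T.LocalMin R P ∧ p ∈ P

/-- One step of discrete water flow. -/
def FlowStep (T : ImpTerrain V) (R : V → ℝ) (p q : V) : Prop :=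
  (∃ P, T.LocalMin R P ∧ p ∈ P ∧ q ∈ P ∧ T.adj p q) ∨
    (¬ T.InLocalMin R p ∧ T.SDN R p q)

/-- `p ⇝_R q` : water from `p` reaches `q` in realization `R`. -/
def FlowsTo (T : ImpTerrain V) (R : V → ℝ) : V → V → Prop :=
  Relation.ReflTransGen (T.FlowStep R)

/-- The (discrete) watershed of a set of nodes `Q` in realization `R`. -/
def WS (T : ImpTerrain V) (R : V → ℝ) (Q : Set V) : Set V :=
  {p | ∃ q ∈ Q, T.FlowsTo R p q}

/-- The potential watershed of `Q`. -/
def PoWS (T : ImpTerrain V) (Q : Set V) : Set V :=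
  {p | ∃ R, T.IsRealization R ∧ p ∈ T.WS R Q}

/-- A flow path: a simple path following steepest-descent edges that ends in,
and visits all nodes of, a local minimum. -/
def IsFlowPath (T : ImpTerrain V) (R : V → ℝ) (L : List V) : Prop :=
  L.Nodup ∧ L.Chain' (fun p q => T.SDN R p q) ∧
    ∃ P, T.LocalMin R P ∧ (∀ v ∈ P, v ∈ L) ∧ ∃ hne : L ≠ [], L.getLast hne ∈ P

/-- The `Q`-avoiding potential watershed of `S`: nodes having, in some
realization, a flow path to a node of `S` whose portion up to that node
avoids `Q`. -/
def AvWS (T : ImpTerrain V) (Q S : Set V) : Set V :=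
  {p | ∃ R, T.IsRealization R ∧ ∃ L, T.IsFlowPath R L ∧ ∃ s ∈ S,
    ∃ i j : Fin L.length, (i : ℕ) ≤ (j : ℕ) ∧ L.get i = p ∧ L.get j = s ∧
      ∀ k : Fin L.length, (i : ℕ) ≤ (k : ℕ) → (k : ℕ) ≤ (j : ℕ) → L.get k ∉ Q}

/-- The persistent watershed of `Q`. -/
def PsWS (T : ImpTerrain V) (Q : Set V) : Set V :=
  (T.AvWS Q (T.PoWS Q)ᶜ)ᶜ

/-- The core watershed of `Q`: nodes from which every induced flow path leads
to a node of `Q`. -/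
def CoWS (T : ImpTerrain V) (Q : Set V) : Set V :=
  {p | ∀ R, T.IsRealization R → ∀ L, T.IsFlowPath R L →
    ∀ i : Fin L.length, L.get i = p →
      ∃ q ∈ Q, ∃ j : Fin L.length, (i : ℕ) ≤ (j : ℕ) ∧ L.get j = q}

/-- Union of all node sets disjoint from `Q` that form a local minimum in some
realization. -/
def Vmin (T : ImpTerrain V) (Q : Set V) : Set V :=
  ⋃₀ {r | r ∩ Q = ∅ ∧ ∃ R, T.IsRealization R ∧ T.LocalMin R r}

/-- `S` contains a local minimum in every realization. -/
def AlwaysMin (T : ImpTerrain V) (S : Set V) : Prop :=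
  ∀ R, T.IsRealization R → ∃ P, T.LocalMin R P ∧ P ⊆ S

/-- An imprecise minimum: a minimal set containing a local minimum in every
realization. -/
def ImpreciseMin (T : ImpTerrain V) (S : Set V) : Prop :=
  T.AlwaysMin S ∧ ∀ S', S' ⊂ S → ¬ T.AlwaysMin S'

/-- A terrain is regular if every local minimum of the lowermost realization is
an imprecise minimum. -/
def Regular (T : ImpTerrain V) : Prop :=
  ∀ P, T.LocalMin T.low P → T.ImpreciseMin P

/-- A proxy of `S`: a node of `S` from which water can never reach a node
outside `S` in any realization. -/
def IsProxy (T : ImpTerrain V) (S : Set V) (p : V) : Prop :=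
  p ∈ S ∧ ∀ R, T.IsRealization R → ∀ q, q ∉ S → ¬ T.FlowsTo R p q

/-- `R'` is an `ε`-perturbation of `R`. -/
def Perturb (ε : ℝ) (R R' : V → ℝ) : Prop := ∀ v, |R' v - R v| ≤ ε

/-- `S` together with all `ε`-perturbations of its members (`S^ε`). -/
def Enlarge (S : Set (V → ℝ)) (ε : ℝ) : Set (V → ℝ) :=
  S ∪ {R' | ∃ R ∈ S, Perturb ε R R'}

/-- `Π(S)` : flow paths induced by realizations in `S`. -/
def FlowPathsOf (T : ImpTerrain V) (S : Set (V → ℝ)) : Set (List V) :=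
  {L | ∃ R ∈ S, T.IsFlowPath R L}

/-- A flow path is stable with respect to `S`. -/
def StableWrt (T : ImpTerrain V) (S : Set (V → ℝ)) (L : List V) : Prop :=
  ∃ ε > (0 : ℝ), ∃ R ∈ S, ∀ R', Perturb ε R R' → T.IsFlowPath R' L

/-- State of the sweep-plane minimum-removal algorithm. -/
structure SweepState (V : Type) where
  discovered : Set V
  final : V → Option ℝ
  proxies : Set V

def pendingS (st : SweepState V) (v : V) : Prop :=
  v ∈ st.discovered ∧ st.final v = none

/-- Pending component of `v`. -/
def pendComp (T : ImpTerrain V) (st : SweepState V) (v : V) : Set V :=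
  {u | Relation.ReflTransGen (fun a b => T.adj a b ∧ pendingS st a ∧ pendingS st b) v u}

/-- One step of the sweep algorithm, processing a `low` event `(v, false)` or a
`high` event `(v, true)`. -/
noncomputable def sweepStep (T : ImpTerrain V) (st : SweepState V) : V × Bool → SweepState V
  | (v, false) =>
    let st1 : SweepState V := ⟨insert v st.discovered, st.final, st.proxies⟩
    if ∃ u, T.adj v u ∧ (st.final u).isSome = true then
      ⟨st1.discovered,
        fun w => if w ∈ T.pendComp st1 v then some (T.low v) else st.final w,
        st.proxies⟩
    else st1
  | (v, true) =>
    if (st.final v).isSome = true then st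
    else
      ⟨st.discovered,
        fun w =>
          if w ∈ T.pendComp st v then some (sSup (T.low '' T.pendComp st v))
          else st.final w,
        insert v st.proxies⟩

noncomputable def sweepRun (T : ImpTerrain V) (evs : List (V × Bool)) : SweepState V :=
  evs.foldl T.sweepStep ⟨∅, fun _ => none, ∅⟩

/-- Elevation key of an event. -/
def eKey (T : ImpTerrain V) : V × Bool → ℝ
  | (v, false) => T.low v
  | (v, true) => T.high v

/-- A valid event list: all events, each once, sorted by elevation with low
events before high events at equal elevation. -/
def ValidEventList (T : ImpTerrain V) (evs : List (V × Bool)) : Prop :=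
  (∀ v : V, ∀ b : Bool, (v, b) ∈ evs) ∧ evs.Nodup ∧
    evs.Pairwise (fun e1 e2 =>
      T.eKey e1 < T.eKey e2 ∨ (T.eKey e1 = T.eKey e2 ∧ ¬(e1.2 = true ∧ e2.2 = false)))

/-- The realization `M` computed by the sweep algorithm. -/
noncomputable def sweepM (T : ImpTerrain V) (evs : List (V × Bool)) : V → ℝ :=
  fun v => ((T.sweepRun evs).final v).getD (T.high v)

end ImpTerrain

namespace ImpTerrain

variable {V : Type} [Fintype V] [DecidableEq V] (T : ImpTerrain V)

lemma hdistPos {u v : V} (h : T.adj u v) : 0 < T.hdist u v := by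
  have hne : u ≠ v := by rintro rfl; exact T.adj_irrefl u h
  have hp : T.pos u ≠ T.pos v := fun hp => hne (T.posInj hp)
  simpa [ImpTerrain.hdist] using dist_pos.mpr hp

lemma connFlow {R : V → ℝ} {P : Set V} (hP : T.LocalMin R P) {u v : V}
    (hu : u ∈ P) (hv : v ∈ P) : T.FlowsTo R u v :=
  Relation.ReflTransGen.mono
    (fun a b hab => Or.inl ⟨P, hP, hab.2.1, hab.2.2, hab.1⟩)
    _ _ (hP.2.1 u hu v hv)

lemma locminSubset {R : V → ℝ} {P P' : Set V} (hP : T.LocalMin R P)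
    (hP' : T.LocalMin R P') {x : V} (hx : x ∈ P) (hx' : x ∈ P') : P ⊆ P' := by
  intro y hy
  have h := hP.2.1 x hx y hy
  clear hy
  induction h with
  | refl => exact hx'
  | @tail b c _ e ih =>
    by_contra hc
    have hcN : c ∈ T.Nbhd P' := ⟨hc, b, ih, T.adj_symm b c e.1⟩
    have h1 := hP'.2.2.2 b ih c hcN
    have h2 := hP.2.2.1 b e.2.1 c e.2.2
    linarith

lemma locminEq {R : V → ℝ} {P P' : Set V} (hP : T.LocalMin R P)
    (hP' : T.LocalMin R P') {x : V} (hx : x ∈ P) (hx' : x ∈ P') : P = P' :=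
  subset_antisymm (T.locminSubset hP hP' hx hx') (T.locminSubset hP' hP hx' hx)

lemma R'real {S : Set V} (hSmin : T.LocalMin T.low S) (hle : ∀ v, T.low v ≤ T.high v)
    {R : V → ℝ} (hR : T.IsRealization R) {q : V} (hq : q ∈ S) :
    T.IsRealization (fun v => if v ∈ S then T.low q else R v) := by
  intro v
  by_cases hv : v ∈ S
  · have heq : T.low v = T.low q := hSmin.2.2.1 v hv q hq
    simp only [if_pos hv]
    exact ⟨le_of_eq heq, heq ▸ hle v⟩
  · simp only [if_neg hv]; exact hR v

lemma R'locmin {S : Set V} (hSmin : T.LocalMin T.low S)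
    {R : V → ℝ} (hR : T.IsRealization R) {q : V} (hq : q ∈ S) :
    T.LocalMin (fun v => if v ∈ S then T.low q else R v) S := by
  refine ⟨hSmin.1, hSmin.2.1, ?_, ?_⟩
  · intro u hu v hv; simp [hu, hv]
  · intro u hu t ht
    simp only [if_pos hu, if_neg ht.1]
    exact lt_of_lt_of_le (hSmin.2.2.2 q hq t ht) (hR t).1

lemma keyFlow {S : Set V} (hSmin : T.LocalMin T.low S) {R : V → ℝ}
    (hR : T.IsRealization R) {q : V} (hq : q ∈ S) {a : V}
    (ha : T.FlowsTo R a q) :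
    ∃ s ∈ S, T.FlowsTo (fun v => if v ∈ S then T.low q else R v) a s := by
  classical
  set ℓ : ℝ := T.low q with hℓ
  set R' : V → ℝ := fun v => if v ∈ S then ℓ else R v with hR'
  have hR'S : ∀ s ∈ S, R' s = ℓ := fun s hs => by simp [hR', hs]
  have hR'nS : ∀ v, v ∉ S → R' v = R v := fun v hv => by simp [hR', hv]
  have hlconst : ∀ s ∈ S, T.low s = ℓ := fun s hs => hSmin.2.2.1 s hs q hq
  have hlR : ∀ s ∈ S, ℓ ≤ R s := fun s hs => (hlconst s hs) ▸ (hR s).1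
  have hR'le : ∀ v, R' v ≤ R v := by
    intro v; by_cases hv : v ∈ S
    · rw [hR'S v hv]; exact hlR v hv
    · rw [hR'nS v hv]
  have hslope_out : ∀ u t, u ∉ S → t ∉ S → T.slope R' u t = T.slope R u t := by
    intro u t hu ht; unfold ImpTerrain.slope; rw [hR'nS u hu, hR'nS t ht]
  have hslope_S : ∀ u t, u ∉ S → t ∈ S → T.slope R' u t = (R u - ℓ) / T.hdist u t := by
    intro u t hu ht; unfold ImpTerrain.slope; rw [hR'nS u hu, hR'S t ht]
  have hslope_mono : ∀ u t, T.adj u t → u ∉ S → T.slope R u t ≤ T.slope R' u t := by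
    intro u t hadj hu
    unfold ImpTerrain.slope
    rw [hR'nS u hu]
    have hd := T.hdistPos hadj
    rw [div_le_div_iff₀ hd hd]
    exact mul_le_mul_of_nonneg_right (by linarith [hR'le t]) hd.le
  have F2 : ∀ P : Set V, T.LocalMin R' P → P ∩ S = ∅ → T.LocalMin R P := by
    intro P hP hdisj
    have hns : ∀ x ∈ P, x ∉ S := fun x hx hxS =>
      (Set.eq_empty_iff_forall_notMem.mp hdisj x) ⟨hx, hxS⟩
    refine ⟨hP.1, hP.2.1, ?_, ?_⟩
    · intro u hu v hv
      have h := hP.2.2.1 u hu v hv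
      rwa [hR'nS u (hns u hu), hR'nS v (hns v hv)] at h
    · intro u hu t ht
      have h1 := hP.2.2.2 u hu t ht
      rw [hR'nS u (hns u hu)] at h1
      exact lt_of_lt_of_le h1 (hR'le t)
  have Z1 : ∀ P₀ : Set V, T.LocalMin R P₀ → ∀ u, u ∈ P₀ → u ∉ S → ℓ ≤ R u →
      (∃ t, T.adj u t ∧ t ∈ S) → ∃ s ∈ S, T.FlowsTo R' u s := by
    intro P₀ hP₀ u huP huS hlu hnb
    by_cases hIL : T.InLocalMin R' u
    · obtain ⟨P, hPloc, huP'⟩ := hIL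
      by_cases hPS : (P ∩ S).Nonempty
      · obtain ⟨x, hxP, hxS⟩ := hPS
        exact ⟨x, hxS, T.connFlow hPloc huP' hxP⟩
      · exfalso
        have hdisj : P ∩ S = ∅ := Set.not_nonempty_iff_eq_empty.mp hPS
        obtain ⟨t, hadj, htS⟩ := hnb
        have htP : t ∉ P := fun htP =>
          (Set.eq_empty_iff_forall_notMem.mp hdisj t) ⟨htP, htS⟩
        have htN : t ∈ T.Nbhd P := ⟨htP, u, huP', T.adj_symm u t hadj⟩
        have h1 := hPloc.2.2.2 u huP' t htN
        rw [hR'nS u huS, hR'S t htS] at h1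
        linarith
    · obtain ⟨t0, hadj0, ht0S⟩ := hnb
      set F : Finset V := Finset.univ.filter (fun t => T.adj u t ∧ t ∈ S) with hF
      have hFne : F.Nonempty := ⟨t0, by simp [hF, hadj0, ht0S]⟩
      obtain ⟨t', ht'F, hmax⟩ := F.exists_max_image (T.slope R' u) hFne
      have ht' : T.adj u t' ∧ t' ∈ S := by simpa [hF] using ht'F
      have hsd : T.SDN R' u t' := by
        refine ⟨ht'.1, ?_, ?_⟩
        · rw [hslope_S u t' huS ht'.2]
          exact div_nonneg (by linarith) (le_of_lt (T.hdistPos ht'.1))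
        · intro r hr
          by_cases hrS : r ∈ S
          · exact hmax r (by simp [hF, hr, hrS])
          · rw [hslope_out u r huS hrS]
            have hRur : R u ≤ R r := by
              by_cases hrP : r ∈ P₀
              · exact le_of_eq (hP₀.2.2.1 u huP r hrP)
              · exact le_of_lt (hP₀.2.2.2 u huP r ⟨hrP, u, huP, T.adj_symm u r hr⟩)
            have h0 : T.slope R u r ≤ 0 := by
              unfold ImpTerrain.slope
              exact div_nonpos_of_nonpos_of_nonneg (by linarith) (le_of_lt (T.hdistPos hr))
            have h1 : (0:ℝ) ≤ T.slope R' u t' := by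
              rw [hslope_S u t' huS ht'.2]
              exact div_nonneg (by linarith) (le_of_lt (T.hdistPos ht'.1))
            linarith
      exact ⟨t', ht'.2, Relation.ReflTransGen.single (Or.inr ⟨hIL, hsd⟩)⟩
  have Z2 : ∀ P₀ : Set V, T.LocalMin R P₀ → (∀ x ∈ P₀, ℓ ≤ R x) →
      ∀ z u, T.ConnIn P₀ u z → u ∈ P₀ →
      (z ∈ S ∨ ∃ t, T.adj z t ∧ t ∈ S) → u ∈ S ∨ ∃ s ∈ S, T.FlowsTo R' u s := by
    intro P₀ hP₀ hval z u hconn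
    induction hconn using Relation.ReflTransGen.head_induction_on with
    | refl =>
      intro hzP hz
      by_cases hzS : z ∈ S
      · exact Or.inl hzS
      · rcases hz with hzS' | hnb
        · exact absurd hzS' hzS
        · exact Or.inr (Z1 P₀ hP₀ z hzP hzS (hval z hzP) hnb)
    | @head u v e h' ih =>
      intro huP hz
      by_cases huS : u ∈ S
      · exact Or.inl huS
      right
      by_cases hnb : ∃ t, T.adj u t ∧ t ∈ S
      · exact Z1 P₀ hP₀ u huP huS (hval u huP) hnb
      have hvnS : v ∉ S := fun hvS => hnb ⟨v, e.1, hvS⟩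
      rcases ih e.2.2 hz with hvS | ⟨s, hsS, hflow⟩
      · exact absurd hvS hvnS
      by_cases hIL : T.InLocalMin R' u
      · obtain ⟨P, hPloc, huP'⟩ := hIL
        by_cases hPS : (P ∩ S).Nonempty
        · obtain ⟨x, hxP, hxS⟩ := hPS
          exact ⟨x, hxS, T.connFlow hPloc huP' hxP⟩
        · have hdisj : P ∩ S = ∅ := Set.not_nonempty_iff_eq_empty.mp hPS
          have hPR : T.LocalMin R P := F2 P hPloc hdisj
          have hPP : P = P₀ := T.locminEq hPR hP₀ huP' huP
          have hstep : T.FlowStep R' u v := Or.inl ⟨P, hPloc, huP', hPP ▸ e.2.2, e.1⟩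
          exact ⟨s, hsS, hflow.head hstep⟩
      · have hRuv : R u = R v := hP₀.2.2.1 u huP v e.2.2
        have h2 : T.slope R u v = 0 := by
          unfold ImpTerrain.slope; rw [hRuv, sub_self, zero_div]
        have hsd : T.SDN R' u v := by
          refine ⟨e.1, ?_, ?_⟩
          · rw [hslope_out u v huS hvnS, h2]
          · intro r hr
            have hrS : r ∉ S := fun hrS => hnb ⟨r, hr, hrS⟩
            rw [hslope_out u r huS hrS, hslope_out u v huS hvnS, h2]
            have hRur : R u ≤ R r := by
              by_cases hrP : r ∈ P₀
              · exact le_of_eq (hP₀.2.2.1 u huP r hrP)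
              · exact le_of_lt (hP₀.2.2.2 u huP r ⟨hrP, u, huP, T.adj_symm u r hr⟩)
            unfold ImpTerrain.slope
            exact div_nonpos_of_nonpos_of_nonneg (by linarith) (le_of_lt (T.hdistPos hr))
        exact ⟨s, hsS, hflow.head (Or.inr ⟨hIL, hsd⟩)⟩
  induction ha using Relation.ReflTransGen.head_induction_on with
  | refl => exact ⟨q, hq, Relation.ReflTransGen.refl⟩
  | @head a c e h' ih =>
    by_cases haS : a ∈ S
    · exact ⟨a, haS, Relation.ReflTransGen.refl⟩
    by_cases hIL : T.InLocalMin R' a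
    · obtain ⟨P, hPloc, haP⟩ := hIL
      by_cases hPS : (P ∩ S).Nonempty
      · obtain ⟨x, hxP, hxS⟩ := hPS
        exact ⟨x, hxS, T.connFlow hPloc haP hxP⟩
      · have hdisj : P ∩ S = ∅ := Set.not_nonempty_iff_eq_empty.mp hPS
        have hPR : T.LocalMin R P := F2 P hPloc hdisj
        rcases e with ⟨P₀, hP₀, haP₀, hcP₀, hadj⟩ | ⟨hnIL, _⟩
        · have hPP : P = P₀ := T.locminEq hPR hP₀ haP haP₀
          have hstep : T.FlowStep R' a c := Or.inl ⟨P, hPloc, haP, hPP ▸ hcP₀, hadj⟩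
          obtain ⟨s, hsS, hflow⟩ := ih
          exact ⟨s, hsS, hflow.head hstep⟩
        · exact absurd ⟨P, hPR, haP⟩ hnIL
    · rcases e with ⟨P₀, hP₀, haP₀, hcP₀, hadj⟩ | ⟨hnIL, hadj, hnn, hmaxR⟩
      · by_cases hP₀S : (P₀ ∩ S).Nonempty
        · obtain ⟨x, hxP, hxS⟩ := hP₀S
          have hval : ∀ y ∈ P₀, ℓ ≤ R y := fun y hy => by
            have h1 := hP₀.2.2.1 y hy x hxP
            have h2 := hlR x hxS
            linarith
          rcases Z2 P₀ hP₀ hval x a (hP₀.2.1 a haP₀ x hxP) haP₀ (Or.inl hxS) with h | h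
          · exact absurd h haS
          · exact h
        · have hdisj := Set.not_nonempty_iff_eq_empty.mp hP₀S
          have hnsP₀ : ∀ x ∈ P₀, x ∉ S := fun x hx hxS =>
            (Set.eq_empty_iff_forall_notMem.mp hdisj x) ⟨hx, hxS⟩
          have hnotP₀ : ¬ T.LocalMin R' P₀ := fun h => hIL ⟨P₀, h, haP₀⟩
          have hfail : ∃ u ∈ P₀, ∃ t ∈ T.Nbhd P₀, R' t ≤ R' u := by
            by_contra hcon
            push_neg at hcon
            apply hnotP₀
            refine ⟨hP₀.1, hP₀.2.1, ?_, ?_⟩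
            · intro u hu v hv
              rw [hR'nS u (hnsP₀ u hu), hR'nS v (hnsP₀ v hv)]
              exact hP₀.2.2.1 u hu v hv
            · exact fun u hu t ht => hcon u hu t ht
          obtain ⟨u, huP, t, htN, hle'⟩ := hfail
          have htS : t ∈ S := by
            by_contra htS
            have h1 := hP₀.2.2.2 u huP t htN
            rw [hR'nS u (hnsP₀ u huP), hR'nS t htS] at hle'
            linarith
          have hlu : ℓ ≤ R u := by
            rw [hR'nS u (hnsP₀ u huP), hR'S t htS] at hle'; exact hle'
          have hval : ∀ y ∈ P₀, ℓ ≤ R y := fun y hy => by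
            have := hP₀.2.2.1 y hy u huP; linarith
          obtain ⟨htP, w, hwP, hadjtw⟩ := htN
          rcases Z2 P₀ hP₀ hval w a (hP₀.2.1 a haP₀ w hwP) haP₀
            (Or.inr ⟨t, T.adj_symm t w hadjtw, htS⟩) with h | h
          · exact absurd h haS
          · exact h
      · by_cases hall : ∀ r, T.adj a r → T.slope R' a r ≤ T.slope R' a c
        · have h0 : (0:ℝ) ≤ T.slope R' a c := le_trans hnn (hslope_mono a c hadj haS)
          obtain ⟨s, hsS, hflow⟩ := ih
          exact ⟨s, hsS, hflow.head (Or.inr ⟨hIL, hadj, h0, hall⟩)⟩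
        · push_neg at hall
          obtain ⟨r, hr, hgt⟩ := hall
          have hrS : r ∈ S := by
            by_contra hrS
            rw [hslope_out a r haS hrS] at hgt
            have h1 := hmaxR r hr
            have h2 := hslope_mono a c hadj haS
            linarith
          set F : Finset V := Finset.univ.filter (fun t => T.adj a t ∧ t ∈ S) with hF
          have hFne : F.Nonempty := ⟨r, by simp [hF, hr, hrS]⟩
          obtain ⟨t', ht'F, hmax⟩ := F.exists_max_image (T.slope R' a) hFne
          have ht' : T.adj a t' ∧ t' ∈ S := by simpa [hF] using ht'F
          have hrt' : T.slope R' a r ≤ T.slope R' a t' := hmax r (by simp [hF, hr, hrS])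
          have hsd : T.SDN R' a t' := by
            refine ⟨ht'.1, ?_, ?_⟩
            · have h2 := hslope_mono a c hadj haS; linarith
            · intro r' hr'
              by_cases hr'S : r' ∈ S
              · exact hmax r' (by simp [hF, hr', hr'S])
              · rw [hslope_out a r' haS hr'S]
                have h1 := hmaxR r' hr'
                have h2 := hslope_mono a c hadj haS
                linarith
          exact ⟨t', ht'.2, Relation.ReflTransGen.single (Or.inr ⟨hIL, hsd⟩)⟩

end ImpTerrain


/-- On a regular terrain, all nodes of an imprecise minimum share the same
lower elevation bound, and every nonempty subset has the same potential
watershed and the same watershed in the lowermost realization. -/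
theorem stmt4 {V : Type} [Fintype V] [DecidableEq V] (T : ImpTerrain V)
    (hle : ∀ v, T.low v ≤ T.high v) (hreg : T.Regular)
    (S : Set V) (hS : T.ImpreciseMin S) :
    (∀ s ∈ S, ∀ s' ∈ S, T.low s = T.low s') ∧
      ∀ S' ⊆ S, S'.Nonempty →
        T.PoWS S' = T.PoWS S ∧ T.WS T.low S' = T.WS T.low S := by
  classical
  have hlowreal : T.IsRealization T.low := fun v => ⟨le_refl _, hle v⟩
  obtain ⟨P, hP, hPS⟩ := hS.1 T.low hlowreal
  have hPeq : P = S := by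
    by_contra hne
    exact hS.2 P (hPS.ssubset_of_ne hne) (hreg P hP).1
  have hSmin : T.LocalMin T.low S := hPeq ▸ hP
  refine ⟨fun s hs s' hs' => hSmin.2.2.1 s hs s' hs', ?_⟩
  intro S' hS' hne'
  obtain ⟨s₀, hs₀⟩ := hne'
  constructor
  · apply subset_antisymm
    · rintro p ⟨R, hRreal, q, hq, hflow⟩
      exact ⟨R, hRreal, q, hS' hq, hflow⟩
    · rintro p ⟨R, hRreal, q, hq, hflow⟩
      obtain ⟨s, hsS, hflow'⟩ := T.keyFlow hSmin hRreal hq hflow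
      have hreal' := T.R'real hSmin hle hRreal hq
      have hloc' := T.R'locmin hSmin hRreal hq
      exact ⟨_, hreal', s₀, hs₀, hflow'.trans (T.connFlow hloc' hsS (hS' hs₀))⟩
  · apply subset_antisymm
    · rintro p ⟨q', hq', hflow⟩
      exact ⟨q', hS' hq', hflow⟩
    · rintro p ⟨q', hq', hflow⟩
      exact ⟨s₀, hs₀, hflow.trans (T.connFlow hSmin hq' (hS' hs₀))⟩
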